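/- Fix a real q > 1, a positive integer t, and nonnegative reals μ_1 ≤ μ_2 ≤ … ≤ μ_t with μ_t strictly larger than all μ_i for i < t. Define S(z) = ∑ q^(∑_{i=1}^t μ_i c_i), the sum over all t-tuples (c_1,…,c_t) of positive integers with c_1 + … + c_t = z. Then S(z) / q^(μ_t z) converges, as z → ∞ through the integers, to ∏_{i=1}^{t-1} (q^(μ_t - μ_i) - 1)^{-1}. -/

import Mathlib

open Filter Finset

/-- Auxiliary: infinite sum over a pi type of a product of summable nonnegative functions. -/
lemma aux_hasSum_pi : ∀ (n : ℕ) (g : Fin n → ℕ → ℝ) (a : Fin n → ℝ),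
    (∀ i k, 0 ≤ g i k) → (∀ i, HasSum (g i) (a i)) →
    HasSum (fun d : Fin n → ℕ => ∏ i, g i (d i)) (∏ i, a i) := by
  intro n
  induction n with
  | zero =>
    intro g a _ _
    have h1 : (fun d : Fin 0 → ℕ => ∏ i, g i (d i)) = fun _ => (1 : ℝ) := by
      funext d; simp
    rw [h1]
    have := hasSum_single (f := fun _ : Fin 0 → ℕ => (1 : ℝ)) (fun _ => 0)
      (fun b hb => absurd (Subsingleton.elim b _) hb)
    simpa using this
  | succ n ih =>
    intro g a hg ha
    have h1 : HasSum (g 0) (a 0) := ha 0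
    have h2 : HasSum (fun d : Fin n → ℕ => ∏ i, g i.succ (d i)) (∏ i : Fin n, a i.succ) :=
      ih (fun i : Fin n => g i.succ) (fun i : Fin n => a i.succ)
        (fun i k => hg _ _) (fun i => ha _)
    have hfg : Summable (fun p : ℕ × (Fin n → ℕ) => g 0 p.1 * ∏ i, g i.succ (p.2 i)) := by
      apply summable_mul_of_summable_norm (f := g 0) (g := fun d : Fin n → ℕ => ∏ i, g i.succ (d i))
      · refine h1.summable.congr fun k => ?_
        rw [Real.norm_eq_abs, abs_of_nonneg (hg 0 k)]
      · refine h2.summable.congr fun d => ?_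
        rw [Real.norm_eq_abs, abs_of_nonneg (Finset.prod_nonneg fun i _ => hg _ _)]
    have hmul := h1.mul h2 hfg
    have key := (((Fin.consEquiv (fun _ : Fin (n + 1) => ℕ)).symm).hasSum_iff).mpr hmul
    have heq : ((fun p : ℕ × (Fin n → ℕ) => g 0 p.1 * ∏ i, g i.succ (p.2 i)) ∘
        ((Fin.consEquiv (fun _ : Fin (n + 1) => ℕ)).symm)) = fun d : Fin (n + 1) → ℕ => ∏ i, g i (d i) := by
      funext d
      simp [Fin.consEquiv, Fin.prod_univ_succ, Fin.tail]
    rw [heq] at key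
    rw [Fin.prod_univ_succ]
    exact key

/-- Auxiliary: a product over `univ.erase (Fin.last t)` as a product over `Fin t`. -/
lemma aux_prod_erase_last {t : ℕ} (h : Fin (t + 1) → ℝ) :
    ∏ i ∈ Finset.univ.erase (Fin.last t), h i = ∏ i : Fin t, h i.castSucc := by
  have himg : (Finset.univ : Finset (Fin t)).image Fin.castSucc
      = Finset.univ.erase (Fin.last t) := by
    ext j
    simp only [Finset.mem_image, Finset.mem_univ, true_and, Finset.mem_erase, and_true]
    constructor
    · rintro ⟨i, rfl⟩
      exact (Fin.castSucc_lt_last i).ne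
    · intro hj
      exact Fin.exists_castSucc_eq.mpr hj
  rw [← himg, Finset.prod_image (fun x _ y _ hxy => Fin.castSucc_injective _ hxy)]

/-- Balanced multi-summation asymptotics with a unique maximal exponent: for `q > 1` and
nonnegative reals `μ 0 ≤ … ≤ μ t` with `μ` maximal exactly at the last index, the sum
`S z = ∑ q^(∑ μ i * c i)` over compositions `c` of `z` into `t+1` positive parts satisfies
`S z / q^(μ_last z) → ∏_{i ≠ last} (q^(μ_last - μ i) - 1)⁻¹`. -/
theorem stmt_7 (q : ℝ) (hq : 1 < q) (t : ℕ) (μ : Fin (t + 1) → ℝ)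
    (hμ0 : ∀ i, 0 ≤ μ i) (hmono : Monotone μ)
    (hmax : ∀ i : Fin (t + 1), i ≠ Fin.last t → μ i < μ (Fin.last t)) :
    Filter.Tendsto
      (fun z : ℕ =>
        (∑ c ∈ (Finset.Nat.antidiagonalTuple (t + 1) z).filter (fun c => ∀ i, 0 < c i),
            q ^ (∑ i, μ i * (c i : ℝ)))
          / q ^ (μ (Fin.last t) * (z : ℝ)))
      Filter.atTop
      (nhds (∏ i ∈ Finset.univ.erase (Fin.last t), (q ^ (μ (Fin.last t) - μ i) - 1)⁻¹)) := by
  have hq0 : (0 : ℝ) < q := lt_trans one_pos hq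
  set T : Fin (t + 1) := Fin.last t with hT
  set r : Fin (t + 1) → ℝ := fun i => q ^ (μ i - μ T) with hr
  have hrpos : ∀ i, 0 < r i := fun i => Real.rpow_pos_of_pos hq0 _
  have hrlt : ∀ i, i ≠ T → r i < 1 := fun i hi =>
    Real.rpow_lt_one_of_one_lt_of_neg hq (sub_neg.mpr (hmax i hi))
  classical
  set g : Fin t → ℕ → ℝ := fun i k => if k = 0 then 0 else (r i.castSucc) ^ k with hgdef
  have hcast_ne : ∀ i : Fin t, (i.castSucc : Fin (t + 1)) ≠ T :=
    fun i => (Fin.castSucc_lt_last i).ne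
  have hg0 : ∀ i k, 0 ≤ g i k := by
    intro i k
    simp only [hgdef]
    split
    · exact le_refl 0
    · exact (pow_pos (hrpos _) _).le
  have hginv : ∀ i : Fin t, (r i.castSucc)⁻¹ = q ^ (μ T - μ i.castSucc) := by
    intro i
    rw [hr, ← Real.rpow_neg hq0.le, neg_sub]
  have hgsum : ∀ i : Fin t, HasSum (g i) ((q ^ (μ T - μ i.castSucc) - 1)⁻¹) := by
    intro i
    set s := r i.castSucc with hs
    have hs0 : 0 < s := hrpos _
    have hs1 : s < 1 := hrlt _ (hcast_ne i)
    have h1 : HasSum (fun k : ℕ => s ^ (k + 1)) (s * (1 - s)⁻¹) := by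
      have := (hasSum_geometric_of_lt_one hs0.le hs1).mul_left s
      refine this.congr_fun fun k => ?_
      rw [pow_succ']
    have h2 : HasSum (g i) (s * (1 - s)⁻¹) := by
      have hinj : Function.Injective Nat.succ := Nat.succ_injective
      have hsupp : ∀ x, x ∉ Set.range Nat.succ → g i x = 0 := by
        intro x hx
        have hx0 : x = 0 := by
          cases x with
          | zero => rfl
          | succ m => exact absurd ⟨m, rfl⟩ hx
        simp [hgdef, hx0]
      refine (hinj.hasSum_iff hsupp).mp ?_
      refine h1.congr_fun fun k => ?_
      simp [hgdef, Function.comp, hs]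
    have hval : (q ^ (μ T - μ i.castSucc) - 1)⁻¹ = s * (1 - s)⁻¹ := by
      rw [← hginv i, ← hs]
      have hs0' : s ≠ 0 := hs0.ne'
      have hs1' : (1 : ℝ) - s ≠ 0 := by linarith
      have h3 : s⁻¹ - 1 = (1 - s) / s := by field_simp
      rw [h3, inv_div, div_eq_mul_inv]
    rw [hval]
    exact h2
  -- total sum
  have hP : HasSum (fun d : Fin t → ℕ => ∏ i, g i (d i))
      (∏ i ∈ Finset.univ.erase T, (q ^ (μ T - μ i) - 1)⁻¹) := by
    rw [aux_prod_erase_last (fun i => (q ^ (μ T - μ i) - 1)⁻¹)]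
    exact aux_hasSum_pi t g _ hg0 hgsum
  -- exhausting finsets
  set F : ℕ → Finset (Fin t → ℕ) := fun z =>
    (Fintype.piFinset fun _ : Fin t => Finset.range (z + 1)).filter
      fun d => ∑ i, d i ≤ z with hF
  have hFmem : ∀ z (d : Fin t → ℕ), d ∈ F z ↔ ∑ i, d i ≤ z := by
    intro z d
    simp only [hF, Finset.mem_filter, Fintype.mem_piFinset, Finset.mem_range]
    constructor
    · exact fun h => h.2
    · intro h
      refine ⟨fun i => Nat.lt_succ_of_le (le_trans ?_ h), h⟩
      exact Finset.single_le_sum (f := fun j => d j) (fun j _ => Nat.zero_le _)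
        (Finset.mem_univ i)
  have hFmono : Monotone F := by
    intro a b hab d hd
    rw [hFmem] at hd ⊢
    exact le_trans hd hab
  have hFtend : Tendsto F atTop atTop :=
    tendsto_atTop_finset_of_monotone hFmono fun d => ⟨∑ i, d i, (hFmem _ d).mpr le_rfl⟩
  have hcomp : Tendsto (fun z : ℕ => ∑ d ∈ F (z - 1), ∏ i, g i (d i)) atTop
      (nhds (∏ i ∈ Finset.univ.erase T, (q ^ (μ T - μ i) - 1)⁻¹)) :=
    hP.comp (hFtend.comp (tendsto_sub_atTop_nat 1))
  refine Tendsto.congr' ?_ hcomp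
  filter_upwards [eventually_ge_atTop 1] with z hz
  -- Step A : remove the indicator
  have stepA : ∑ d ∈ F (z - 1), ∏ i, g i (d i)
      = ∑ d ∈ F (z - 1),
          (if ∀ i, 0 < d i then ∏ i, (r i.castSucc) ^ (d i) else 0) := by
    refine Finset.sum_congr rfl fun d _ => ?_
    by_cases hpos : ∀ i, 0 < d i
    · rw [if_pos hpos]
      refine Finset.prod_congr rfl fun i _ => ?_
      simp [hgdef, (hpos i).ne']
    · rw [if_neg hpos]
      push_neg at hpos
      obtain ⟨i, hi⟩ := hpos
      refine Finset.prod_eq_zero (Finset.mem_univ i) ?_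
      simp [hgdef, Nat.le_zero.mp hi]
  rw [stepA, ← Finset.sum_filter]
  -- Step B : the bijection with compositions
  rw [Finset.sum_div]
  refine Finset.sum_nbij' (i := fun d : Fin t → ℕ => Fin.snoc d (z - ∑ i, d i))
    (j := fun c : Fin (t + 1) → ℕ => c ∘ Fin.castSucc) ?_ ?_ ?_ ?_ ?_
  · -- maps into the composition set
    intro d hd
    rw [Finset.mem_filter] at hd ⊢
    obtain ⟨hd1, hd2⟩ := hd
    rw [hFmem] at hd1
    have hsumle : ∑ i, d i ≤ z - 1 := hd1
    have hsumlt : ∑ i, d i < z := lt_of_le_of_lt hsumle (Nat.sub_lt hz one_pos)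
    constructor
    · rw [Finset.Nat.mem_antidiagonalTuple]
      rw [Fin.sum_univ_castSucc]
      simp only [Fin.snoc_castSucc, Fin.snoc_last]
      omega
    · intro i
      refine Fin.lastCases ?_ ?_ i
      · simp only [Fin.snoc_last]
        omega
      · intro j
        simp only [Fin.snoc_castSucc]
        exact hd2 j
  · -- maps back
    intro c hc
    rw [Finset.mem_filter] at hc ⊢
    obtain ⟨hc1, hc2⟩ := hc
    rw [Finset.Nat.mem_antidiagonalTuple] at hc1
    have hsum : (∑ i : Fin t, c i.castSucc) + c (Fin.last t) = z := by
      rw [← Fin.sum_univ_castSucc]; exact hc1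
    have hlast : 0 < c (Fin.last t) := hc2 _
    constructor
    · rw [hFmem]
      simp only [Function.comp]
      omega
    · intro i
      exact hc2 _
  · -- left inverse
    intro d hd
    funext i
    simp [Fin.snoc_castSucc, Function.comp]
  · -- right inverse
    intro c hc
    rw [Finset.mem_filter] at hc
    obtain ⟨hc1, _⟩ := hc
    rw [Finset.Nat.mem_antidiagonalTuple] at hc1
    have hsum : (∑ i : Fin t, c i.castSucc) + c (Fin.last t) = z := by
      rw [← Fin.sum_univ_castSucc]; exact hc1
    funext i
    refine Fin.lastCases ?_ ?_ i
    · simp only [Fin.snoc_last, Function.comp]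
      omega
    · intro j
      simp [Fin.snoc_castSucc, Function.comp]
  · -- values agree
    intro d hd
    rw [Finset.mem_filter] at hd
    obtain ⟨hd1, hd2⟩ := hd
    rw [hFmem] at hd1
    set c : Fin (t + 1) → ℕ := Fin.snoc d (z - ∑ i, d i) with hc
    have hcsum : ∑ i, (c i : ℕ) = z := by
      rw [hc, Fin.sum_univ_castSucc]
      simp only [Fin.snoc_castSucc, Fin.snoc_last]
      omega
    have hccast : ∀ j : Fin t, c j.castSucc = d j := fun j => by
      rw [hc]; simp [Fin.snoc_castSucc]
    -- q ^ (∑ μ i c i) / q ^ (μ T z) = ∏ r(i)^(c i)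
    have key : q ^ (∑ i, μ i * (c i : ℝ)) / q ^ (μ T * (z : ℝ))
        = ∏ i, (r i) ^ (c i) := by
      rw [← Real.rpow_sub hq0]
      have hexp : (∑ i, μ i * (c i : ℝ)) - μ T * (z : ℝ)
          = ∑ i, (μ i - μ T) * (c i : ℝ) := by
        have hz' : (z : ℝ) = ∑ i, (c i : ℝ) := by
          rw [← Nat.cast_sum, hcsum]
        rw [hz', Finset.mul_sum, ← Finset.sum_sub_distrib]
        refine Finset.sum_congr rfl fun i _ => by ring
      rw [hexp, Real.rpow_sum_of_pos hq0]
      refine Finset.prod_congr rfl fun i _ => ?_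
      rw [Real.rpow_mul hq0.le, Real.rpow_natCast]
    rw [key, Fin.prod_univ_castSucc]
    have hrT : r T = 1 := by
      rw [hr]; simp [Real.rpow_zero]
    rw [hrT, one_pow, mul_one]
    exact (Finset.prod_congr rfl fun j _ => by rw [hccast j]).symm
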